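/- For all positive reals a, b: 12·(C(a,b) − N(a,b)) − 7·Δ(a,b) = (√a − √b)⁴/(a+b) ≥ 0, where C(a,b)=(a²+b²)/(a+b), N(a,b)=(a+√(ab)+b)/3, Δ(a,b)=(a−b)²/(a+b). -/

import Mathlib

theorem M0_identity (a b : ℝ) (ha : 0 < a) (hb : 0 < b) :
    12*((a^2+b^2)/(a+b) - (a + Real.sqrt (a*b) + b)/3) - 7*((a-b)^2/(a+b)) =
      (Real.sqrt a - Real.sqrt b)^4/(a+b) ∧
    0 ≤ (Real.sqrt a - Real.sqrt b)^4/(a+b) := by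
  have ha' := ha.le
  have hb' := hb.le
  have hsa : Real.sqrt a ^ 2 = a := Real.sq_sqrt ha'
  have hsb : Real.sqrt b ^ 2 = b := Real.sq_sqrt hb'
  have hab : Real.sqrt (a*b) = Real.sqrt a * Real.sqrt b := Real.sqrt_mul ha' b
  have hsum : a + b ≠ 0 := by positivity
  constructor
  · have hs : 0 < Real.sqrt a := Real.sqrt_pos.2 ha
    have ht : 0 < Real.sqrt b := Real.sqrt_pos.2 hb
    rw [hab, show a = Real.sqrt a ^ 2 from hsa.symm, show b = Real.sqrt b ^ 2 from hsb.symm]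
    set s := Real.sqrt a with hsdef
    set t := Real.sqrt b with htdef
    clear_value s t
    clear hsa hsb hab hsum ha hb ha' hb' hsdef htdef
    have h1 : s^2 + t^2 ≠ 0 := by positivity
    simp only [Real.sqrt_sq hs.le, Real.sqrt_sq ht.le]
    field_simp
    ring
  · positivity
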